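/- Let ω be a finite positive Borel measure on [0,1) with ω̂ doubling. Then there exist C > 0 and η > 0 such that the moments satisfy ω_x ≤ C·(y/x)^η · ω_y for all 0 < x ≤ y < ∞, where ω_x = ∫₀¹ r^x dω(r). -/

import Mathlib

open MeasureTheory Set

noncomputable section Stmt7Aux

namespace Stmt7Aux

def tj (j : ℕ) : ℝ := 1 - (2:ℝ)⁻¹ ^ j

lemma half_pow_le_one (j : ℕ) : (2:ℝ)⁻¹ ^ j ≤ 1 :=
  pow_le_one₀ (by norm_num) (by norm_num)

lemma half_pow_pos (j : ℕ) : 0 < (2:ℝ)⁻¹ ^ j := pow_pos (by norm_num) j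

lemma tj_nonneg (j : ℕ) : 0 ≤ tj j := by
  have := half_pow_le_one j; simp only [tj]; linarith

lemma tj_lt_one (j : ℕ) : tj j < 1 := by
  have := half_pow_pos j; simp only [tj]; linarith

lemma tj_zero : tj 0 = 0 := by simp [tj]

lemma tj_succ (j : ℕ) : (1 + tj j) / 2 = tj (j+1) := by
  simp only [tj, pow_succ]; ring

lemma tj_mono : Monotone tj := by
  intro j k h
  simp only [tj, sub_le_sub_iff_left]
  exact pow_le_pow_of_le_one (by norm_num) (by norm_num) h

lemma integrableOn_rpow (ω : Measure ℝ) [IsFiniteMeasure ω] (x : ℝ) (hx : 0 ≤ x)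
    {s : Set ℝ} (hs : s ⊆ Ico 0 1) : IntegrableOn (fun r : ℝ => r ^ x) s ω := by
  have h : IntegrableOn (fun r : ℝ => r ^ x) (Ico (0:ℝ) 1) ω := by
    apply Measure.integrableOn_of_bounded (M := 1) (measure_ne_top ω _)
      (Measurable.aestronglyMeasurable (by fun_prop))
    filter_upwards [ae_restrict_mem measurableSet_Ico] with r hr
    rw [Real.norm_eq_abs, abs_of_nonneg (Real.rpow_nonneg hr.1 x)]
    exact Real.rpow_le_one hr.1 hr.2.le hx
  exact h.mono_set hs

lemma doub_iter (ω : Measure ℝ) [IsFiniteMeasure ω] {C₀ : ℝ} (hC₀ : 1 ≤ C₀)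
    (hdoub : ∀ r : ℝ, 0 ≤ r → r < 1 →
      (ω (Ico r 1)).toReal ≤ C₀ * (ω (Ico ((1 + r) / 2) 1)).toReal)
    (j k : ℕ) :
    (ω (Ico (tj j) 1)).toReal ≤ C₀ ^ k * (ω (Ico (tj (j + k)) 1)).toReal := by
  induction k with
  | zero => simp
  | succ k ih =>
    have h1 := hdoub (tj (j+k)) (tj_nonneg _) (tj_lt_one _)
    rw [tj_succ] at h1
    calc (ω (Ico (tj j) 1)).toReal ≤ C₀ ^ k * (ω (Ico (tj (j + k)) 1)).toReal := ih
      _ ≤ C₀ ^ k * (C₀ * (ω (Ico (tj (j + k + 1)) 1)).toReal) :=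
          mul_le_mul_of_nonneg_left h1 (pow_nonneg (by linarith) k)
      _ = C₀ ^ (k+1) * (ω (Ico (tj (j + (k + 1))) 1)).toReal := by
          rw [show j + (k+1) = j + k + 1 from rfl, pow_succ]; ring

lemma lower (ω : Measure ℝ) [IsFiniteMeasure ω] {y : ℝ} (hy : 0 < y) {n : ℕ} (hn : 1 ≤ n)
    (hny : y * (2:ℝ)⁻¹ ^ n ≤ 1/2) :
    (ω (Ico (tj n) 1)).toReal ≤ 2 * ∫ r in Ico (0:ℝ) 1, r ^ y ∂ω := by
  have htn : (1:ℝ)/2 ≤ tj n := by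
    have h := pow_le_pow_of_le_one (by norm_num : (0:ℝ) ≤ 2⁻¹) (by norm_num) hn
    simp only [tj]
    norm_num at h ⊢
    linarith
  have hpos : 0 < tj n := lt_of_lt_of_le (by norm_num) htn
  have hkey : (1:ℝ)/2 ≤ tj n ^ y := by
    rcases le_total y 1 with h | h
    · calc (1:ℝ)/2 ≤ tj n := htn
        _ = tj n ^ (1:ℝ) := (Real.rpow_one _).symm
        _ ≤ tj n ^ y := Real.rpow_le_rpow_of_exponent_ge hpos (tj_lt_one n).le h
    · have hs : (-1:ℝ) ≤ -((2:ℝ)⁻¹ ^ n) := by have := half_pow_le_one n; linarith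
      have h3 := one_add_mul_self_le_rpow_one_add hs h
      rw [mul_neg, ← sub_eq_add_neg, ← sub_eq_add_neg] at h3
      have h4 : ((1:ℝ) - (2:ℝ)⁻¹ ^ n) ^ y = tj n ^ y := by rw [tj]
      rw [h4] at h3
      linarith
  have hsub : Ico (tj n) 1 ⊆ Ico (0:ℝ) 1 := Ico_subset_Ico_left (tj_nonneg n)
  have hInt : IntegrableOn (fun r : ℝ => r ^ y) (Ico (0:ℝ) 1) ω :=
    integrableOn_rpow ω y hy.le (subset_refl _)
  have h1 : tj n ^ y * (ω (Ico (tj n) 1)).toReal ≤ ∫ r in Ico (tj n) 1, r ^ y ∂ω := by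
    calc tj n ^ y * (ω (Ico (tj n) 1)).toReal
        = ∫ _ in Ico (tj n) 1, tj n ^ y ∂ω := by
          rw [setIntegral_const, smul_eq_mul, mul_comm]; rfl
      _ ≤ ∫ r in Ico (tj n) 1, r ^ y ∂ω := by
          apply setIntegral_mono_on (integrableOn_const (measure_ne_top _ _) enorm_ne_top)
            (hInt.mono_set hsub) measurableSet_Ico
          intro r hr
          exact Real.rpow_le_rpow (tj_nonneg n) hr.1 hy.le
  have h2 : (∫ r in Ico (tj n) 1, r ^ y ∂ω) ≤ ∫ r in Ico (0:ℝ) 1, r ^ y ∂ω := by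
    apply setIntegral_mono_set hInt ?_ hsub.eventuallyLE
    filter_upwards [ae_restrict_mem measurableSet_Ico] with r hr
    exact Real.rpow_nonneg hr.1 y
  have hw : 0 ≤ (ω (Ico (tj n) 1)).toReal := ENNReal.toReal_nonneg
  nlinarith [mul_le_mul_of_nonneg_right hkey hw]

lemma geom_aux : ∀ m : ℕ, ∑ j ∈ Finset.range m, (2:ℝ)⁻¹ ^ (m - j) = 1 - (2:ℝ)⁻¹ ^ m := by
  intro m
  induction m with
  | zero => simp
  | succ m ih =>
    rw [Finset.sum_range_succ]
    have hc : ∀ j ∈ Finset.range m, (2:ℝ)⁻¹ ^ (m + 1 - j) = 2⁻¹ * (2:ℝ)⁻¹ ^ (m - j) := by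
      intro j hj; rw [Finset.mem_range] at hj
      rw [show m + 1 - j = (m - j) + 1 by omega, pow_succ]; ring
    rw [Finset.sum_congr rfl hc, ← Finset.mul_sum, ih, show m + 1 - m = 1 by omega, pow_succ]
    ring

lemma exp_neg_le (p : ℕ) {u : ℝ} (hu : 0 < u) :
    Real.exp (-u) ≤ (Nat.factorial p : ℝ) / u ^ p := by
  have h1 : u ^ p / (Nat.factorial p : ℝ) ≤ Real.exp u := by
    calc u ^ p / (Nat.factorial p : ℝ)
        ≤ ∑ i ∈ Finset.range (p+1), u ^ i / Nat.factorial i := by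
          apply Finset.single_le_sum (f := fun i => u ^ i / (Nat.factorial i : ℝ))
            (fun i _ => by positivity) (Finset.self_mem_range_succ p)
      _ ≤ Real.exp u := Real.sum_le_exp_of_nonneg hu.le _
  have h2 : (0:ℝ) < u ^ p / (Nat.factorial p : ℝ) := by positivity
  rw [Real.exp_neg]
  calc (Real.exp u)⁻¹ ≤ (u ^ p / (Nat.factorial p : ℝ))⁻¹ := by
        exact inv_anti₀ h2 h1
    _ = (Nat.factorial p : ℝ) / u ^ p := by rw [inv_div]

lemma upper_decomp (ω : Measure ℝ) [IsFiniteMeasure ω] {x : ℝ} (hx : 0 < x) (m : ℕ) :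
    (∫ r in Ico (0:ℝ) 1, r ^ x ∂ω) ≤
      (∑ j ∈ Finset.range m, tj (j+1) ^ x * (ω (Ico (tj j) 1)).toReal)
        + ∫ r in Ico (tj m) 1, r ^ x ∂ω := by
  induction m with
  | zero => simp [tj_zero]
  | succ m ih =>
    have hsub1 : Ico (tj m) (tj (m+1)) ⊆ Ico (0:ℝ) 1 := fun r hr =>
      ⟨le_trans (tj_nonneg m) hr.1, lt_of_lt_of_le hr.2 (tj_lt_one _).le⟩
    have hsub2 : Ico (tj (m+1)) 1 ⊆ Ico (0:ℝ) 1 := Ico_subset_Ico_left (tj_nonneg _)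
    have hsplit : (∫ r in Ico (tj m) 1, r ^ x ∂ω)
        = (∫ r in Ico (tj m) (tj (m+1)), r ^ x ∂ω) + ∫ r in Ico (tj (m+1)) 1, r ^ x ∂ω := by
      rw [← setIntegral_union Ico_disjoint_Ico_same measurableSet_Ico
        (integrableOn_rpow ω x hx.le hsub1) (integrableOn_rpow ω x hx.le hsub2),
        Ico_union_Ico_eq_Ico (tj_mono (Nat.le_succ m)) (tj_lt_one _).le]
    have hterm : (∫ r in Ico (tj m) (tj (m+1)), r ^ x ∂ω)
        ≤ tj (m+1) ^ x * (ω (Ico (tj m) 1)).toReal := by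
      calc (∫ r in Ico (tj m) (tj (m+1)), r ^ x ∂ω)
          ≤ ∫ _ in Ico (tj m) (tj (m+1)), tj (m+1) ^ x ∂ω := by
            apply setIntegral_mono_on (integrableOn_rpow ω x hx.le hsub1)
              (integrableOn_const (measure_ne_top _ _) enorm_ne_top) measurableSet_Ico
            intro r hr
            exact Real.rpow_le_rpow (le_trans (tj_nonneg m) hr.1) hr.2.le hx.le
        _ = (ω (Ico (tj m) (tj (m+1)))).toReal * tj (m+1) ^ x := by
            rw [setIntegral_const, smul_eq_mul]; rfl
        _ ≤ tj (m+1) ^ x * (ω (Ico (tj m) 1)).toReal := by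
            rw [mul_comm]
            apply mul_le_mul_of_nonneg_left _ (Real.rpow_nonneg (tj_nonneg _) x)
            exact ENNReal.toReal_mono (measure_ne_top ω _)
              (measure_mono (Ico_subset_Ico_right (tj_lt_one _).le))
    calc (∫ r in Ico (0:ℝ) 1, r ^ x ∂ω)
        ≤ (∑ j ∈ Finset.range m, tj (j+1) ^ x * (ω (Ico (tj j) 1)).toReal)
          + ∫ r in Ico (tj m) 1, r ^ x ∂ω := ih
      _ ≤ (∑ j ∈ Finset.range m, tj (j+1) ^ x * (ω (Ico (tj j) 1)).toReal)
          + (tj (m+1) ^ x * (ω (Ico (tj m) 1)).toReal + ∫ r in Ico (tj (m+1)) 1, r ^ x ∂ω) := by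
            rw [hsplit]; gcongr
      _ = (∑ j ∈ Finset.range (m+1), tj (j+1) ^ x * (ω (Ico (tj j) 1)).toReal)
          + ∫ r in Ico (tj (m+1)) 1, r ^ x ∂ω := by
            rw [Finset.sum_range_succ]; ring

end Stmt7Aux

end Stmt7Aux

set_option maxHeartbeats 1000000 in
open Stmt7Aux in
theorem stmt_7 (ω : Measure ℝ) [IsFiniteMeasure ω] (C₀ : ℝ) (hC₀ : 1 ≤ C₀)
    (hdoub : ∀ r : ℝ, 0 ≤ r → r < 1 →
      (ω (Ico r 1)).toReal ≤ C₀ * (ω (Ico ((1 + r) / 2) 1)).toReal)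
    (hcero : (ω (Ico (0 : ℝ) 1)).toReal ≤ C₀ * (ω (Ico (1 / 2 : ℝ) 1)).toReal) :
    ∃ C η : ℝ, 0 < C ∧ 0 < η ∧ ∀ x y : ℝ, 0 < x → x ≤ y →
      (∫ r in Ico (0 : ℝ) 1, r ^ x ∂ω) ≤ C * (y / x) ^ η * (∫ r in Ico (0 : ℝ) 1, r ^ y ∂ω) := by
  classical
  obtain ⟨p, hp⟩ : ∃ p : ℕ, 2 * C₀ < 2 ^ p := pow_unbounded_of_one_lt (2*C₀) one_lt_two
  have hC0pos : (0:ℝ) < C₀ := by linarith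
  set K : ℝ := (Nat.factorial p : ℝ) * 2 ^ p with hKdef
  have hK0 : 0 < K := by positivity
  set L : ℝ := Real.logb 2 C₀ with hLdef
  have hL0 : 0 ≤ L := Real.logb_nonneg one_lt_two hC₀
  set η : ℝ := Real.logb 2 (2 * C₀) with hηdef
  have hη : η = 1 + L := by
    rw [hηdef, Real.logb_mul (by norm_num) (by positivity), hLdef,
      Real.logb_self_eq_one (by norm_num)]
  refine ⟨2 * (K + 1) * C₀ ^ 3, η, by positivity, by rw [hη]; linarith, ?_⟩
  intro x y hx hxy
  have hy : 0 < y := lt_of_lt_of_le hx hxy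
  have hyx1 : 1 ≤ y / x := (one_le_div hx).mpr hxy
  set m : ℕ := ⌊Real.logb 2 (max x 1)⌋₊ with hmdef
  set n : ℕ := max ⌈Real.logb 2 (2 * y)⌉₊ 1 with hndef
  have hmax1 : (1:ℝ) ≤ max x 1 := le_max_right x 1
  have hmaxpos : (0:ℝ) < max x 1 := by linarith
  have hlogm0 : 0 ≤ Real.logb 2 (max x 1) := Real.logb_nonneg one_lt_two hmax1
  have ha : (2:ℝ) ^ m ≤ max x 1 := by
    have h1 : (m:ℝ) ≤ Real.logb 2 (max x 1) := Nat.floor_le hlogm0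
    calc (2:ℝ)^m = (2:ℝ)^(m:ℝ) := (Real.rpow_natCast 2 m).symm
      _ ≤ (2:ℝ)^(Real.logb 2 (max x 1)) := Real.rpow_le_rpow_of_exponent_le one_le_two h1
      _ = max x 1 := Real.rpow_logb two_pos (by norm_num) hmaxpos
  have hb : max x 1 ≤ 2 * (2:ℝ)^m := by
    have h1 : Real.logb 2 (max x 1) < (m:ℝ) + 1 := Nat.lt_floor_add_one _
    calc max x 1 = (2:ℝ)^(Real.logb 2 (max x 1)) :=
          (Real.rpow_logb two_pos (by norm_num) hmaxpos).symm
      _ ≤ (2:ℝ)^((m:ℝ)+1) := Real.rpow_le_rpow_of_exponent_le one_le_two h1.le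
      _ = 2 * (2:ℝ)^m := by
          rw [Real.rpow_add two_pos, Real.rpow_one, Real.rpow_natCast]; ring
  have hc : 2 * y ≤ (2:ℝ) ^ n := by
    have h1 : Real.logb 2 (2*y) ≤ (n:ℝ) := by
      calc Real.logb 2 (2*y) ≤ (⌈Real.logb 2 (2*y)⌉₊:ℝ) := Nat.le_ceil _
        _ ≤ (n:ℝ) := by exact_mod_cast Nat.cast_le.mpr (le_max_left _ _)
    calc 2*y = (2:ℝ)^(Real.logb 2 (2*y)) :=
          (Real.rpow_logb two_pos (by norm_num) (by positivity)).symm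
      _ ≤ (2:ℝ)^(n:ℝ) := Real.rpow_le_rpow_of_exponent_le one_le_two h1
      _ = (2:ℝ)^n := Real.rpow_natCast 2 n
  have hn1 : 1 ≤ n := le_max_right _ 1
  have hmn : m ≤ n := by
    rcases le_or_gt x 1 with h | h
    · have hm0 : m = 0 := by
        rw [hmdef, max_eq_right h, Real.logb_one]; simp
      omega
    · have h2 : (2:ℝ)^m < (2:ℝ)^n := by
        have hax : (2:ℝ)^m ≤ x := by rwa [max_eq_left h.le] at ha
        nlinarith
      exact le_of_lt ((pow_lt_pow_iff_right₀ one_lt_two).mp h2)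
  have hf : (2:ℝ)^(n-m) ≤ 8 * (y / x) := by
    have hpowsub : (2:ℝ)^(n-m) = (2:ℝ)^n / (2:ℝ)^m := by
      rw [eq_div_iff (by positivity), ← pow_add]
      congr 1; omega
    rcases le_or_gt (1/2 : ℝ) y with h | h
    · have h2n : (2:ℝ)^n ≤ 4 * y := by
        rcases Nat.eq_zero_or_pos ⌈Real.logb 2 (2*y)⌉₊ with h0 | h0
        · have : n = 1 := by rw [hndef, h0]; simp
          rw [this]; norm_num; linarith
        · have hneq : n = ⌈Real.logb 2 (2*y)⌉₊ := by rw [hndef]; omega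
          have hlog0 : 0 ≤ Real.logb 2 (2*y) := Real.logb_nonneg one_lt_two (by linarith)
          have h1 : (n:ℝ) < Real.logb 2 (2*y) + 1 := by
            rw [hneq]; exact Nat.ceil_lt_add_one hlog0
          calc (2:ℝ)^n = (2:ℝ)^(n:ℝ) := (Real.rpow_natCast 2 n).symm
            _ ≤ (2:ℝ)^(Real.logb 2 (2*y) + 1) :=
                Real.rpow_le_rpow_of_exponent_le one_le_two h1.le
            _ = 2 * (2*y) := by
                rw [Real.rpow_add two_pos, Real.rpow_one,
                  Real.rpow_logb two_pos (by norm_num) (by positivity)]; ring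
            _ = 4 * y := by ring
      have hxm : x / 2 ≤ (2:ℝ)^m := by
        have : x ≤ max x 1 := le_max_left x 1
        linarith
      rw [hpowsub]
      calc (2:ℝ)^n / (2:ℝ)^m ≤ (4*y) / (x/2) :=
          div_le_div₀ (by linarith) h2n (by positivity) hxm
        _ = 8 * (y/x) := by field_simp; ring
    · have hm0 : m = 0 := by
        rw [hmdef, max_eq_right (by linarith : x ≤ 1), Real.logb_one]; simp
      have hn0 : ⌈Real.logb 2 (2*y)⌉₊ = 0 := by
        apply Nat.ceil_eq_zero.mpr
        apply Real.logb_nonpos one_lt_two (by positivity) (by linarith)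
      have hne : n = 1 := by rw [hndef, hn0]; simp
      rw [hne, hm0]
      norm_num
      nlinarith
  have hg : C₀ ^ (n - m) ≤ C₀ ^ 3 * (y/x) ^ η := by
    have e1 : C₀ = (2:ℝ) ^ L := (Real.rpow_logb two_pos (by norm_num) hC0pos).symm
    calc C₀ ^ (n-m) = ((2:ℝ)^((n-m):ℕ)) ^ L := by
          rw [e1, ← Real.rpow_natCast ((2:ℝ)^L) (n-m), ← Real.rpow_mul two_pos.le, mul_comm,
            Real.rpow_mul two_pos.le, Real.rpow_natCast]
      _ ≤ (8*(y/x)) ^ L := Real.rpow_le_rpow (by positivity) hf hL0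
      _ = 8 ^ L * (y/x) ^ L := Real.mul_rpow (by norm_num) (by positivity)
      _ ≤ C₀ ^ 3 * (y/x) ^ η := by
          have e8 : (8:ℝ) ^ L = C₀ ^ 3 := by
            rw [show (8:ℝ) = (2:ℝ)^(3:ℕ) by norm_num, ← Real.rpow_natCast 2 3,
              ← Real.rpow_mul two_pos.le, mul_comm, Real.rpow_mul two_pos.le, ← e1,
              Real.rpow_natCast]
          rw [e8]
          exact mul_le_mul_of_nonneg_left
            (Real.rpow_le_rpow_of_exponent_le hyx1 (by rw [hη]; linarith)) (by positivity)
  -- upper estimate for the x-moment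
  have hIx : (∫ r in Ico (0:ℝ) 1, r ^ x ∂ω) ≤ (K + 1) * (ω (Ico (tj m) 1)).toReal := by
    have h1 := upper_decomp ω hx m
    have htail : (∫ r in Ico (tj m) 1, r ^ x ∂ω) ≤ (ω (Ico (tj m) 1)).toReal := by
      calc (∫ r in Ico (tj m) 1, r ^ x ∂ω) ≤ ∫ _ in Ico (tj m) 1, (1:ℝ) ∂ω := by
            apply setIntegral_mono_on
              (integrableOn_rpow ω x hx.le (Ico_subset_Ico_left (tj_nonneg m)))
              (integrableOn_const (measure_ne_top _ _) enorm_ne_top) measurableSet_Ico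
            intro r hr
            exact Real.rpow_le_one (le_trans (tj_nonneg m) hr.1) hr.2.le hx.le
        _ = (ω (Ico (tj m) 1)).toReal := by rw [setIntegral_const, smul_eq_mul, mul_one]; rfl
    have hterms : ∀ j ∈ Finset.range m, tj (j+1) ^ x * (ω (Ico (tj j) 1)).toReal
        ≤ (tj (j+1) ^ x * C₀ ^ (m - j)) * (ω (Ico (tj m) 1)).toReal := by
      intro j hj
      rw [Finset.mem_range] at hj
      have hd := doub_iter ω hC₀ hdoub j (m - j)
      rw [show j + (m - j) = m by omega] at hd
      calc tj (j+1)^x * (ω (Ico (tj j) 1)).toReal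
          ≤ tj (j+1)^x * (C₀^(m-j) * (ω (Ico (tj m) 1)).toReal) :=
            mul_le_mul_of_nonneg_left hd (Real.rpow_nonneg (tj_nonneg _) x)
        _ = _ := by ring
    have hS : (∑ j ∈ Finset.range m, tj (j+1) ^ x * C₀ ^ (m - j)) ≤ K := by
      rcases lt_or_ge x 1 with hx1 | hx1
      · have hm0 : m = 0 := by
          rw [hmdef, max_eq_right hx1.le, Real.logb_one]; simp
        rw [hm0]
        simpa using hK0.le
      · have hxm : (2:ℝ)^m ≤ x := by rwa [max_eq_left hx1] at ha
        have hterm2 : ∀ j ∈ Finset.range m,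
            tj (j+1)^x * C₀^(m-j) ≤ K * (2:ℝ)⁻¹^(m-j) := by
          intro j hj; rw [Finset.mem_range] at hj
          set q : ℕ := m - j - 1 with hq
          have hqe : m - j = q + 1 := by omega
          rw [hqe]
          have e1 : tj (j+1) ≤ Real.exp (-((2:ℝ)⁻¹^(j+1))) := by
            have := Real.add_one_le_exp (-((2:ℝ)⁻¹^(j+1)))
            simp only [tj]; linarith
          have e2 : tj (j+1)^x ≤ Real.exp (-(x * (2:ℝ)⁻¹^(j+1))) := by
            calc tj (j+1)^x ≤ (Real.exp (-((2:ℝ)⁻¹^(j+1))))^x :=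
                Real.rpow_le_rpow (tj_nonneg _) e1 hx.le
              _ = Real.exp (-((2:ℝ)⁻¹^(j+1)) * x) := (Real.exp_mul _ x).symm
              _ = Real.exp (-(x * (2:ℝ)⁻¹^(j+1))) := by ring_nf
          have e3 : (2:ℝ)^q ≤ x * (2:ℝ)⁻¹^(j+1) := by
            have hpq : (2:ℝ)^q * 2^(j+1) = 2^m := by rw [← pow_add]; congr 1; omega
            rw [inv_pow, ← div_eq_mul_inv, le_div_iff₀ (by positivity)]
            calc (2:ℝ)^q * 2^(j+1) = 2^m := hpq
              _ ≤ x := hxm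
          have e4 : Real.exp (-(x * (2:ℝ)⁻¹^(j+1))) ≤ Real.exp (-((2:ℝ)^q)) :=
            Real.exp_le_exp.mpr (by linarith)
          have e5 : Real.exp (-((2:ℝ)^q)) ≤ (Nat.factorial p : ℝ) / ((2:ℝ)^q)^p :=
            exp_neg_le p (by positivity)
          have e6 : tj (j+1)^x * C₀^(q+1)
              ≤ ((Nat.factorial p:ℝ) / ((2:ℝ)^q)^p) * C₀^(q+1) := by
            apply mul_le_mul_of_nonneg_right (le_trans e2 (le_trans e4 e5)) (by positivity)
          refine le_trans e6 ?_
          rw [hKdef, div_mul_eq_mul_div, inv_pow, ← div_eq_mul_inv,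
            div_le_div_iff₀ (by positivity) (by positivity)]
          have key : ((2:ℝ)*C₀)^(q+1) ≤ ((2:ℝ)^p)^(q+1) :=
            pow_le_pow_left₀ (by positivity) hp.le _
          calc (Nat.factorial p:ℝ) * C₀^(q+1) * 2^(q+1)
              = (Nat.factorial p:ℝ) * ((2:ℝ)*C₀)^(q+1) := by rw [mul_pow]; ring
            _ ≤ (Nat.factorial p:ℝ) * ((2:ℝ)^p)^(q+1) :=
                mul_le_mul_of_nonneg_left key (by positivity)
            _ = (Nat.factorial p:ℝ) * 2^p * ((2:ℝ)^q)^p := by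
                rw [← pow_mul, ← pow_mul, show p*(q+1) = p + q*p by ring, pow_add]
                ring
        calc (∑ j ∈ Finset.range m, tj (j+1)^x * C₀^(m-j))
            ≤ ∑ j ∈ Finset.range m, K * (2:ℝ)⁻¹^(m-j) := Finset.sum_le_sum hterm2
          _ = K * ∑ j ∈ Finset.range m, (2:ℝ)⁻¹^(m-j) := by rw [Finset.mul_sum]
          _ = K * (1 - (2:ℝ)⁻¹^m) := by rw [geom_aux]
          _ ≤ K := by nlinarith [half_pow_pos m]
    calc (∫ r in Ico (0:ℝ) 1, r ^ x ∂ω)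
        ≤ (∑ j ∈ Finset.range m, tj (j+1) ^ x * (ω (Ico (tj j) 1)).toReal)
          + ∫ r in Ico (tj m) 1, r ^ x ∂ω := h1
      _ ≤ (∑ j ∈ Finset.range m, (tj (j+1) ^ x * C₀ ^ (m - j)) * (ω (Ico (tj m) 1)).toReal)
          + (ω (Ico (tj m) 1)).toReal := add_le_add (Finset.sum_le_sum hterms) htail
      _ = ((∑ j ∈ Finset.range m, tj (j+1) ^ x * C₀ ^ (m - j)) + 1)
          * (ω (Ico (tj m) 1)).toReal := by rw [← Finset.sum_mul]; ring
      _ ≤ (K + 1) * (ω (Ico (tj m) 1)).toReal :=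
          mul_le_mul_of_nonneg_right (by linarith) ENNReal.toReal_nonneg
  have hstep2 : (ω (Ico (tj m) 1)).toReal ≤ C₀^(n-m) * (ω (Ico (tj n) 1)).toReal := by
    have hd := doub_iter ω hC₀ hdoub m (n - m)
    rwa [show m + (n - m) = n by omega] at hd
  have hstep3 : (ω (Ico (tj n) 1)).toReal ≤ 2 * ∫ r in Ico (0:ℝ) 1, r ^ y ∂ω := by
    apply lower ω hy hn1
    rw [inv_pow, ← div_eq_mul_inv, div_le_iff₀ (by positivity)]
    linarith [hc]
  have hIy0 : 0 ≤ ∫ r in Ico (0:ℝ) 1, r ^ y ∂ω :=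
    setIntegral_nonneg measurableSet_Ico (fun r hr => Real.rpow_nonneg hr.1 y)
  have hC₀nm : (0:ℝ) ≤ C₀^(n-m) := by positivity
  calc (∫ r in Ico (0:ℝ) 1, r ^ x ∂ω)
      ≤ (K+1) * (ω (Ico (tj m) 1)).toReal := hIx
    _ ≤ (K+1) * (C₀^(n-m) * (ω (Ico (tj n) 1)).toReal) :=
        mul_le_mul_of_nonneg_left hstep2 (by positivity)
    _ ≤ (K+1) * (C₀^(n-m) * (2 * ∫ r in Ico (0:ℝ) 1, r ^ y ∂ω)) :=
        mul_le_mul_of_nonneg_left (mul_le_mul_of_nonneg_left hstep3 hC₀nm) (by positivity)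
    _ ≤ (K+1) * ((C₀^3 * (y/x)^η) * (2 * ∫ r in Ico (0:ℝ) 1, r ^ y ∂ω)) := by
        apply mul_le_mul_of_nonneg_left
          (mul_le_mul_of_nonneg_right hg (by nlinarith)) (by positivity)
    _ = 2 * (K + 1) * C₀ ^ 3 * (y / x) ^ η * ∫ r in Ico (0:ℝ) 1, r ^ y ∂ω := by ring
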